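/- Kalman filter update (Gaussian Bayes formula): let the prior be the Gaussian measure N(m, Σ) on ℝ^k with Σ symmetric positive definite, let H be a d×k real matrix, R a d×d symmetric positive definite matrix, and y ∈ ℝ^d. Let φ_{Hx,R}(y) denote the density at y of N(Hx, R) with respect to Lebesgue measure on ℝ^d, and set Z = ∫ φ_{Hx,R}(y) N(m,Σ)(dx). Then 0 < Z < ∞ and the probability measure Z^{-1} φ_{Hx,R}(y) N(m,Σ)(dx) equals the Gaussian measure N(m + K(y − Hm), Σ − KHΣ), where K = ΣHᵀ(HΣHᵀ + R)^{-1} is the Kalman gain. -/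

import Mathlib

open MeasureTheory Matrix
open scoped ENNReal NNReal

/-- The density at `x` of the Gaussian measure `N(m, S)` on `ℝ^n` (for `S`
symmetric positive definite) with respect to Lebesgue measure. -/
noncomputable def gaussDensity {n : ℕ} (m : Fin n → ℝ) (S : Matrix (Fin n) (Fin n) ℝ)
    (x : Fin n → ℝ) : ℝ :=
  (Real.sqrt ((2 * Real.pi) ^ n * S.det))⁻¹ *
    Real.exp (-((x - m) ⬝ᵥ (S⁻¹ *ᵥ (x - m))) / 2)

/-- The Gaussian measure `N(m, S)` on `ℝ^n` (for `S` symmetric positive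
definite), defined through its Lebesgue density. -/
noncomputable def gaussMeasure {n : ℕ} (m : Fin n → ℝ)
    (S : Matrix (Fin n) (Fin n) ℝ) : Measure (Fin n → ℝ) :=
  volume.withDensity fun x => ENNReal.ofReal (gaussDensity m S x)

namespace KalmanAux

open Real

/-! ### Generalities on dot products and quadratic forms -/

lemma sqrt_pow' {x : ℝ} (h : 0 ≤ x) (n : ℕ) : Real.sqrt (x ^ n) = Real.sqrt x ^ n := by
  induction n with
  | zero => simp
  | succ n ih => rw [pow_succ, pow_succ, Real.sqrt_mul (by positivity), ih]

lemma dot_helper {p q r : ℕ} (A : Matrix (Fin p) (Fin q) ℝ) (M : Matrix (Fin p) (Fin r) ℝ)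
    (u : Fin q → ℝ) (w : Fin r → ℝ) :
    (A *ᵥ u) ⬝ᵥ (M *ᵥ w) = u ⬝ᵥ ((Aᵀ * M) *ᵥ w) := by
  rw [← Matrix.mulVec_mulVec, Matrix.dotProduct_mulVec u Aᵀ, Matrix.vecMul_transpose]

lemma sym_swap {p : ℕ} {M : Matrix (Fin p) (Fin p) ℝ} (hM : Mᵀ = M) (v w : Fin p → ℝ) :
    v ⬝ᵥ (M *ᵥ w) = w ⬝ᵥ (M *ᵥ v) := by
  rw [Matrix.dotProduct_mulVec, dotProduct_comm, ← Matrix.mulVec_transpose, hM]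

lemma measurable_quadForm {n : ℕ} (M : Matrix (Fin n) (Fin n) ℝ) :
    Measurable (fun z : Fin n → ℝ => z ⬝ᵥ (M *ᵥ z)) := by
  have : (fun z : Fin n → ℝ => z ⬝ᵥ (M *ᵥ z))
      = fun z => ∑ i, ∑ j, z i * (M i j * z j) := by
    ext z
    simp [dotProduct, Matrix.mulVec, Finset.mul_sum]
  rw [this]
  apply Finset.measurable_sum
  intro i _
  apply Finset.measurable_sum
  intro j _
  exact (measurable_pi_apply i).mul (measurable_const.mul (measurable_pi_apply j))

lemma measurable_gaussDensity {n : ℕ} (m : Fin n → ℝ) (S : Matrix (Fin n) (Fin n) ℝ) :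
    Measurable (gaussDensity m S) := by
  unfold gaussDensity
  apply Measurable.const_mul
  apply Real.measurable_exp.comp
  apply Measurable.div_const
  apply Measurable.neg
  exact (measurable_quadForm S⁻¹).comp (measurable_id.sub measurable_const)

lemma measurable_gaussDensity_obs {k d : ℕ} (H : Matrix (Fin d) (Fin k) ℝ)
    (R : Matrix (Fin d) (Fin d) ℝ) (y : Fin d → ℝ) :
    Measurable (fun x : Fin k → ℝ => gaussDensity (H *ᵥ x) R y) := by
  unfold gaussDensity
  apply Measurable.const_mul
  apply Real.measurable_exp.comp
  apply Measurable.div_const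
  apply Measurable.neg
  have hmv : Measurable (fun x : Fin k → ℝ => y - H *ᵥ x) :=
    measurable_const.sub (Matrix.toLin' H).continuous_of_finiteDimensional.measurable
  exact (measurable_quadForm R⁻¹).comp hmv

lemma gaussDensity_pos {n : ℕ} {m : Fin n → ℝ} {S : Matrix (Fin n) (Fin n) ℝ} (hS : S.PosDef)
    (x : Fin n → ℝ) : 0 < gaussDensity m S x := by
  apply mul_pos _ (Real.exp_pos _)
  rw [inv_pos]
  exact Real.sqrt_pos.2 (mul_pos (pow_pos (by positivity) n) hS.det_pos)

/-! ### The Gaussian normalization integral -/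

lemma std_gauss_eq_prod {n : ℕ} (u : Fin n → ℝ) :
    Real.exp (-(u ⬝ᵥ u) / 2) = ∏ i, Real.exp (-(2⁻¹ : ℝ) * (u i) ^ 2) := by
  rw [← Real.exp_sum]
  congr 1
  rw [dotProduct, neg_div, Finset.sum_div, ← Finset.sum_neg_distrib]
  congr 1; ext i; ring

lemma integral_std_gauss {n : ℕ} :
    ∫ u : Fin n → ℝ, Real.exp (-(u ⬝ᵥ u) / 2) = Real.sqrt ((2 * Real.pi) ^ n) := by
  calc ∫ u : Fin n → ℝ, Real.exp (-(u ⬝ᵥ u) / 2)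
      = ∫ u : Fin n → ℝ, ∏ i, Real.exp (-(2⁻¹:ℝ) * (u i) ^ 2) := by
        simp_rw [std_gauss_eq_prod]
    _ = ∏ _i : Fin n, ∫ x : ℝ, Real.exp (-(2⁻¹:ℝ) * x ^ 2) :=
        MeasureTheory.integral_fintype_prod_eq_prod (ι := Fin n) (fun _ x => Real.exp (-(2⁻¹:ℝ) * x ^ 2))
    _ = Real.sqrt ((2 * Real.pi) ^ n) := by
        rw [integral_gaussian, Finset.prod_const, sqrt_pow' (by positivity),
          show ((π : ℝ) / 2⁻¹) = 2 * π by rw [div_inv_eq_mul]; ring]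
        simp

lemma integrable_std_gauss {n : ℕ} :
    Integrable (fun u : Fin n → ℝ => Real.exp (-(u ⬝ᵥ u) / 2)) := by
  simp_rw [std_gauss_eq_prod]
  exact MeasureTheory.Integrable.fintype_prod fun i => integrable_exp_neg_mul_sq (by norm_num)

lemma lintegral_comp_mulVec {n : ℕ} {A : Matrix (Fin n) (Fin n) ℝ} (hA : A.det ≠ 0)
    {g : (Fin n → ℝ) → ℝ≥0∞} (hg : Measurable g) :
    ∫⁻ x, g x = ENNReal.ofReal |A.det| * ∫⁻ u, g (A *ᵥ u) := by
  have hmap := Real.map_matrix_volume_pi_eq_smul_volume_pi hA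
  have h1 : ∫⁻ u, g (A *ᵥ u) = ∫⁻ x, g x ∂(Measure.map (⇑(Matrix.toLin' A)) volume) := by
    rw [lintegral_map hg (Matrix.toLin' A).continuous_of_finiteDimensional.measurable]
    simp only [Matrix.toLin'_apply]
  rw [h1, hmap, lintegral_smul_measure, smul_eq_mul, ← mul_assoc, ← ENNReal.ofReal_mul (abs_nonneg _),
    abs_inv, mul_inv_cancel₀ (abs_ne_zero.2 hA), ENNReal.ofReal_one, one_mul]

open scoped MatrixOrder in
lemma lintegral_gaussDensity {n : ℕ} {S : Matrix (Fin n) (Fin n) ℝ} (hS : S.PosDef)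
    (m : Fin n → ℝ) :
    ∫⁻ x, ENNReal.ofReal (gaussDensity m S x) = 1 := by
  set A := CFC.sqrt S with hAdef
  have hherm : Aᵀ = A := by
    rw [← Matrix.conjTranspose_eq_transpose_of_trivial]
    exact (Matrix.nonneg_iff_posSemidef.mp (CFC.sqrt_nonneg S)).1
  have hAA : A * A = S := CFC.sqrt_mul_sqrt_self S (Matrix.nonneg_iff_posSemidef.mpr hS.posSemidef)
  have hdetA : A.det * A.det = S.det := by rw [← Matrix.det_mul, hAA]
  have hdetA0 : 0 ≤ A.det := by
    have h := Matrix.nonneg_iff_posSemidef.mp (CFC.sqrt_nonneg S)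
    rw [h.1.det_eq_prod_eigenvalues]
    exact Finset.prod_nonneg fun i _ => h.eigenvalues_nonneg i
  have hdetS : 0 < S.det := hS.det_pos
  have hdetApos : 0 < A.det := by nlinarith
  have hAdet : A.det = Real.sqrt S.det := by rw [← hdetA, Real.sqrt_mul_self hdetA0]
  have hunit : IsUnit A.det := isUnit_iff_ne_zero.2 hdetApos.ne'
  have hquad : ∀ u, (A *ᵥ u) ⬝ᵥ (S⁻¹ *ᵥ (A *ᵥ u)) = u ⬝ᵥ u := by
    intro u
    rw [dot_helper, Matrix.mulVec_mulVec, hherm]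
    have : A * S⁻¹ * A = 1 := by
      rw [← hAA, Matrix.mul_inv_rev, ← Matrix.mul_assoc,
        Matrix.mul_nonsing_inv _ hunit, Matrix.one_mul, Matrix.nonsing_inv_mul _ hunit]
    rw [this, Matrix.one_mulVec]
  set F : (Fin n → ℝ) → ℝ≥0∞ := fun z => ENNReal.ofReal (Real.exp (-(z ⬝ᵥ (S⁻¹ *ᵥ z)) / 2))
    with hFdef
  have hFm : Measurable F := by
    apply ENNReal.measurable_ofReal.comp
    exact Real.measurable_exp.comp (((measurable_quadForm S⁻¹).neg).div_const 2)
  set c : ℝ := Real.sqrt ((2 * Real.pi) ^ n * S.det) with hcdef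
  have hstep1 : ∫⁻ x, ENNReal.ofReal (gaussDensity m S x)
      = ENNReal.ofReal c⁻¹ * ∫⁻ x, F (x - m) := by
    have h₁ : ∀ x, ENNReal.ofReal (gaussDensity m S x) = ENNReal.ofReal c⁻¹ * F (x - m) := by
      intro x; rw [gaussDensity, ENNReal.ofReal_mul (by positivity)]
    simp_rw [h₁]
    exact lintegral_const_mul _ (hFm.comp (measurable_id.sub measurable_const))
  have hstep2 : ∫⁻ x, F (x - m) = ∫⁻ z, F z :=
    (measurePreserving_sub_right volume m).lintegral_comp hFm
  have hstep3 : ∫⁻ z, F z = ENNReal.ofReal |A.det| * ∫⁻ u, F (A *ᵥ u) :=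
    lintegral_comp_mulVec hdetApos.ne' hFm
  have hstep4 : ∫⁻ u, F (A *ᵥ u) = ENNReal.ofReal (Real.sqrt ((2 * Real.pi) ^ n)) := by
    have : ∀ u, F (A *ᵥ u) = ENNReal.ofReal (Real.exp (-(u ⬝ᵥ u) / 2)) := by
      intro u; rw [hFdef]; simp only; rw [hquad]
    simp_rw [this]
    rw [← MeasureTheory.ofReal_integral_eq_lintegral_ofReal integrable_std_gauss
      (Filter.Eventually.of_forall fun u => (Real.exp_pos _).le), integral_std_gauss]
  rw [hstep1, hstep2, hstep3, hstep4, abs_of_pos hdetApos, ← ENNReal.ofReal_mul (by positivity),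
    ← ENNReal.ofReal_mul (by positivity)]
  rw [hcdef, Real.sqrt_mul (by positivity), hAdet]
  rw [show (Real.sqrt ((2*Real.pi)^n) * Real.sqrt S.det)⁻¹
        * (Real.sqrt S.det * Real.sqrt ((2*Real.pi)^n)) = 1 by
    rw [mul_comm (Real.sqrt S.det)]
    exact inv_mul_cancel₀ (by positivity)]
  exact ENNReal.ofReal_one

/-! ### Matrix identities -/

variable {k d : ℕ} {S : Matrix (Fin k) (Fin k) ℝ} {R : Matrix (Fin d) (Fin d) ℝ}
  {H : Matrix (Fin d) (Fin k) ℝ}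

lemma HSHt_posSemidef (hS : S.PosDef) : (H * S * Hᵀ).PosSemidef := by
  have := hS.posSemidef.mul_mul_conjTranspose_same H
  rwa [Matrix.conjTranspose_eq_transpose_of_trivial] at this

lemma Sy_posDef (hS : S.PosDef) (hR : R.PosDef) : (H * S * Hᵀ + R).PosDef :=
  Matrix.PosDef.posSemidef_add (HSHt_posSemidef hS) hR

lemma P_posDef (hS : S.PosDef) (hR : R.PosDef) : (S⁻¹ + Hᵀ * R⁻¹ * H).PosDef := by
  apply hS.inv.add_posSemidef
  have := hR.inv.posSemidef.mul_mul_conjTranspose_same Hᵀ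
  rwa [Matrix.conjTranspose_eq_transpose_of_trivial, Matrix.transpose_transpose] at this

lemma S'_eq_P_inv (hS : S.PosDef) (hR : R.PosDef) :
    S - S * Hᵀ * (H * S * Hᵀ + R)⁻¹ * H * S = (S⁻¹ + Hᵀ * R⁻¹ * H)⁻¹ := by
  have uS : IsUnit S.det := isUnit_iff_ne_zero.2 hS.det_pos.ne'
  have uR : IsUnit R.det := isUnit_iff_ne_zero.2 hR.det_pos.ne'
  have h := Matrix.add_mul_mul_inv_eq_sub S⁻¹ Hᵀ R⁻¹ H
    ((Matrix.isUnit_iff_isUnit_det _).2 (isUnit_iff_ne_zero.2 hS.inv.det_pos.ne'))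
    ((Matrix.isUnit_iff_isUnit_det _).2 (isUnit_iff_ne_zero.2 hR.inv.det_pos.ne'))
    (by
      rw [Matrix.nonsing_inv_nonsing_inv _ uS, Matrix.nonsing_inv_nonsing_inv _ uR]
      rw [Matrix.isUnit_iff_isUnit_det]
      have : (R + H * S * Hᵀ).PosDef := by
        rw [add_comm]; exact Sy_posDef hS hR
      exact isUnit_iff_ne_zero.2 this.det_pos.ne')
  rw [Matrix.nonsing_inv_nonsing_inv _ uS, Matrix.nonsing_inv_nonsing_inv _ uR] at h
  rw [h, add_comm R (H * S * Hᵀ)]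

lemma M1 (hS : S.PosDef) (hR : R.PosDef) :
    (S⁻¹ + Hᵀ * R⁻¹ * H) * (S * Hᵀ * (H * S * Hᵀ + R)⁻¹) = Hᵀ * R⁻¹ := by
  have uS : IsUnit S.det := isUnit_iff_ne_zero.2 hS.det_pos.ne'
  have uR : IsUnit R.det := isUnit_iff_ne_zero.2 hR.det_pos.ne'
  have uSy : IsUnit (H * S * Hᵀ + R).det := isUnit_iff_ne_zero.2 (Sy_posDef hS hR).det_pos.ne'
  have h1 : (S⁻¹ + Hᵀ * R⁻¹ * H) * (S * Hᵀ) = Hᵀ * R⁻¹ * (H * S * Hᵀ + R) := by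
    simp only [Matrix.add_mul, Matrix.mul_add, Matrix.mul_assoc,
      Matrix.nonsing_inv_mul_cancel_left _ _ uS, Matrix.nonsing_inv_mul_cancel_left _ _ uR,
      Matrix.nonsing_inv_mul _ uR, Matrix.mul_one]
    rw [add_comm]
  calc (S⁻¹ + Hᵀ * R⁻¹ * H) * (S * Hᵀ * (H * S * Hᵀ + R)⁻¹)
      = ((S⁻¹ + Hᵀ * R⁻¹ * H) * (S * Hᵀ)) * (H * S * Hᵀ + R)⁻¹ :=
        (Matrix.mul_assoc _ _ _).symm
    _ = Hᵀ * R⁻¹ * (H * S * Hᵀ + R) * (H * S * Hᵀ + R)⁻¹ := by rw [h1]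
    _ = Hᵀ * R⁻¹ := Matrix.mul_nonsing_inv_cancel_right _ _ uSy

lemma Ktrans (hS : S.PosDef) (hR : R.PosDef) :
    (S * Hᵀ * (H * S * Hᵀ + R)⁻¹)ᵀ = (H * S * Hᵀ + R)⁻¹ * (H * S) := by
  have hSy : (H * S * Hᵀ + R).PosDef := Sy_posDef hS hR
  have hSyT : (H * S * Hᵀ + R)ᵀ = H * S * Hᵀ + R := by
    rw [← Matrix.conjTranspose_eq_transpose_of_trivial]
    exact hSy.isHermitian
  have hST : Sᵀ = S := by
    rw [← Matrix.conjTranspose_eq_transpose_of_trivial]; exact hS.isHermitian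
  rw [Matrix.transpose_mul, Matrix.transpose_nonsing_inv, hSyT, Matrix.transpose_mul,
    Matrix.transpose_transpose, hST, Matrix.mul_assoc]

lemma M2 (hS : S.PosDef) (hR : R.PosDef) :
    (S * Hᵀ * (H * S * Hᵀ + R)⁻¹)ᵀ * (Hᵀ * R⁻¹) = R⁻¹ - (H * S * Hᵀ + R)⁻¹ := by
  have uR : IsUnit R.det := isUnit_iff_ne_zero.2 hR.det_pos.ne'
  have uSy : IsUnit (H * S * Hᵀ + R).det := isUnit_iff_ne_zero.2 (Sy_posDef hS hR).det_pos.ne'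
  rw [Ktrans hS hR]
  have key : (H * S) * (Hᵀ * R⁻¹) = (H * S * Hᵀ + R) * R⁻¹ - 1 := by
    rw [Matrix.add_mul, Matrix.mul_nonsing_inv _ uR, add_sub_cancel_right]
    simp only [Matrix.mul_assoc]
  rw [Matrix.mul_assoc, key, Matrix.mul_sub, Matrix.mul_one, ← Matrix.mul_assoc,
    Matrix.nonsing_inv_mul _ uSy, Matrix.one_mul]

lemma det_identity (hS : S.PosDef) (hR : R.PosDef) :
    (S⁻¹ + Hᵀ * R⁻¹ * H).det = (H * S * Hᵀ + R).det / (S.det * R.det) := by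
  have uS : IsUnit S.det := isUnit_iff_ne_zero.2 hS.det_pos.ne'
  have uR : IsUnit R.det := isUnit_iff_ne_zero.2 hR.det_pos.ne'
  have h1 : S⁻¹ + Hᵀ * R⁻¹ * H = S⁻¹ * (1 + S * (Hᵀ * R⁻¹) * H) := by
    rw [Matrix.mul_add, Matrix.mul_one]
    congr 1
    rw [← Matrix.mul_assoc, ← Matrix.mul_assoc, Matrix.nonsing_inv_mul _ uS, Matrix.one_mul]
  have h2 : (1 : Matrix (Fin d) (Fin d) ℝ) + H * (S * (Hᵀ * R⁻¹)) = (H * S * Hᵀ + R) * R⁻¹ := by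
    rw [Matrix.add_mul, Matrix.mul_nonsing_inv _ uR, add_comm]
    congr 1
    rw [Matrix.mul_assoc, Matrix.mul_assoc]
  have h3 : (1 + S * (Hᵀ * R⁻¹) * H).det = (1 + H * (S * (Hᵀ * R⁻¹))).det := by
    rw [Matrix.det_one_add_mul_comm]
  rw [h1, Matrix.det_mul, h3, h2, Matrix.det_mul, Matrix.det_nonsing_inv, Matrix.det_nonsing_inv,
    Ring.inverse_eq_inv, Ring.inverse_eq_inv]
  field_simp

/-! ### The quadratic-form identity -/

lemma quad_core (hS : S.PosDef) (hR : R.PosDef) (u : Fin k → ℝ) (e : Fin d → ℝ) :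
    u ⬝ᵥ (S⁻¹ *ᵥ u) + (e - H *ᵥ u) ⬝ᵥ (R⁻¹ *ᵥ (e - H *ᵥ u))
      = e ⬝ᵥ ((H * S * Hᵀ + R)⁻¹ *ᵥ e)
        + (u - (S * Hᵀ * (H * S * Hᵀ + R)⁻¹) *ᵥ e) ⬝ᵥ
            ((S⁻¹ + Hᵀ * R⁻¹ * H) *ᵥ (u - (S * Hᵀ * (H * S * Hᵀ + R)⁻¹) *ᵥ e)) := by
  set K := S * Hᵀ * (H * S * Hᵀ + R)⁻¹ with hKdef
  set P := S⁻¹ + Hᵀ * R⁻¹ * H with hPdef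
  set Sy := H * S * Hᵀ + R with hSydef
  have hRT : Rᵀ = R := by
    rw [← Matrix.conjTranspose_eq_transpose_of_trivial]; exact hR.isHermitian
  have hRinvT : R⁻¹ᵀ = R⁻¹ := by
    rw [Matrix.transpose_nonsing_inv, hRT]
  have hPT : Pᵀ = P := by
    rw [← Matrix.conjTranspose_eq_transpose_of_trivial]; exact (P_posDef hS hR).isHermitian
  have h_cross : e ⬝ᵥ (R⁻¹ *ᵥ (H *ᵥ u)) = u ⬝ᵥ ((Hᵀ * R⁻¹) *ᵥ e) := by
    rw [sym_swap hRinvT, dot_helper]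
  have h_cross2 : (H *ᵥ u) ⬝ᵥ (R⁻¹ *ᵥ e) = u ⬝ᵥ ((Hᵀ * R⁻¹) *ᵥ e) := dot_helper H R⁻¹ u e
  have h_HuHu : (H *ᵥ u) ⬝ᵥ (R⁻¹ *ᵥ (H *ᵥ u)) = u ⬝ᵥ ((Hᵀ * R⁻¹ * H) *ᵥ u) := by
    rw [dot_helper, Matrix.mulVec_mulVec]
  have h_uPKe : u ⬝ᵥ (P *ᵥ (K *ᵥ e)) = u ⬝ᵥ ((Hᵀ * R⁻¹) *ᵥ e) := by
    rw [Matrix.mulVec_mulVec, hPdef, hKdef, hSydef, M1 hS hR]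
  have h_KePu : (K *ᵥ e) ⬝ᵥ (P *ᵥ u) = u ⬝ᵥ ((Hᵀ * R⁻¹) *ᵥ e) := by
    rw [sym_swap hPT, h_uPKe]
  have h_KePKe : (K *ᵥ e) ⬝ᵥ (P *ᵥ (K *ᵥ e))
      = e ⬝ᵥ (R⁻¹ *ᵥ e) - e ⬝ᵥ (Sy⁻¹ *ᵥ e) := by
    rw [Matrix.mulVec_mulVec, hPdef, hKdef, hSydef, M1 hS hR, dot_helper, M2 hS hR,
      Matrix.sub_mulVec, dotProduct_sub]

  have hPu : u ⬝ᵥ (P *ᵥ u)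
      = u ⬝ᵥ (S⁻¹ *ᵥ u) + u ⬝ᵥ ((Hᵀ * R⁻¹ * H) *ᵥ u) := by
    rw [hPdef, Matrix.add_mulVec, dotProduct_add]
  have expandL : (e - H *ᵥ u) ⬝ᵥ (R⁻¹ *ᵥ (e - H *ᵥ u))
      = e ⬝ᵥ (R⁻¹ *ᵥ e) - 2 * (u ⬝ᵥ ((Hᵀ * R⁻¹) *ᵥ e)) + u ⬝ᵥ ((Hᵀ * R⁻¹ * H) *ᵥ u) := by
    rw [Matrix.mulVec_sub, dotProduct_sub, sub_dotProduct, sub_dotProduct,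
      h_cross, h_cross2, h_HuHu]
    ring
  have expandR : (u - K *ᵥ e) ⬝ᵥ (P *ᵥ (u - K *ᵥ e))
      = u ⬝ᵥ (P *ᵥ u) - 2 * (u ⬝ᵥ ((Hᵀ * R⁻¹) *ᵥ e))
        + (e ⬝ᵥ (R⁻¹ *ᵥ e) - e ⬝ᵥ (Sy⁻¹ *ᵥ e)) := by
    rw [Matrix.mulVec_sub, dotProduct_sub, sub_dotProduct, sub_dotProduct,
      h_uPKe, h_KePu, h_KePKe]
    ring
  rw [expandL, expandR, hPu]
  ring

lemma quad_identity (hS : S.PosDef) (hR : R.PosDef) (m x : Fin k → ℝ) (y : Fin d → ℝ) :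
    (x - m) ⬝ᵥ (S⁻¹ *ᵥ (x - m)) + (y - H *ᵥ x) ⬝ᵥ (R⁻¹ *ᵥ (y - H *ᵥ x))
      = (y - H *ᵥ m) ⬝ᵥ ((H * S * Hᵀ + R)⁻¹ *ᵥ (y - H *ᵥ m))
        + (x - (m + (S * Hᵀ * (H * S * Hᵀ + R)⁻¹) *ᵥ (y - H *ᵥ m))) ⬝ᵥ
            ((S⁻¹ + Hᵀ * R⁻¹ * H) *ᵥ
              (x - (m + (S * Hᵀ * (H * S * Hᵀ + R)⁻¹) *ᵥ (y - H *ᵥ m)))) := by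
  have h1 : y - H *ᵥ x = (y - H *ᵥ m) - H *ᵥ (x - m) := by
    rw [Matrix.mulVec_sub]; abel
  have h2 : x - (m + (S * Hᵀ * (H * S * Hᵀ + R)⁻¹) *ᵥ (y - H *ᵥ m))
      = (x - m) - (S * Hᵀ * (H * S * Hᵀ + R)⁻¹) *ᵥ (y - H *ᵥ m) := by
    abel
  rw [h1, h2]
  exact quad_core hS hR (x - m) (y - H *ᵥ m)

/-! ### The product-of-densities identity -/

lemma gauss_product (hS : S.PosDef) (hR : R.PosDef) (m : Fin k → ℝ) (y : Fin d → ℝ)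
    (x : Fin k → ℝ) :
    gaussDensity m S x * gaussDensity (H *ᵥ x) R y
      = gaussDensity (H *ᵥ m) (H * S * Hᵀ + R) y *
        gaussDensity (m + (S * Hᵀ * (H * S * Hᵀ + R)⁻¹) *ᵥ (y - H *ᵥ m))
          (S - S * Hᵀ * (H * S * Hᵀ + R)⁻¹ * H * S) x := by
  have hSy : (H * S * Hᵀ + R).PosDef := Sy_posDef hS hR
  have hP : (S⁻¹ + Hᵀ * R⁻¹ * H).PosDef := P_posDef hS hR
  have uP : IsUnit (S⁻¹ + Hᵀ * R⁻¹ * H).det := isUnit_iff_ne_zero.2 hP.det_pos.ne'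
  have hS'eq := S'_eq_P_inv (H := H) hS hR
  have hS'inv : (S - S * Hᵀ * (H * S * Hᵀ + R)⁻¹ * H * S)⁻¹ = S⁻¹ + Hᵀ * R⁻¹ * H := by
    rw [hS'eq, Matrix.nonsing_inv_nonsing_inv _ uP]
  have hS'det : (S - S * Hᵀ * (H * S * Hᵀ + R)⁻¹ * H * S).det
      = S.det * R.det / (H * S * Hᵀ + R).det := by
    rw [hS'eq, Matrix.det_nonsing_inv, Ring.inverse_eq_inv, det_identity hS hR, inv_div]
  have hdSy : (H * S * Hᵀ + R).det ≠ 0 := hSy.det_pos.ne'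
  have hconst : (Real.sqrt ((2 * π) ^ k * S.det))⁻¹ * (Real.sqrt ((2 * π) ^ d * R.det))⁻¹
      = (Real.sqrt ((2 * π) ^ d * (H * S * Hᵀ + R).det))⁻¹ *
        (Real.sqrt ((2 * π) ^ k * (S.det * R.det / (H * S * Hᵀ + R).det)))⁻¹ := by
    rw [← mul_inv, ← mul_inv, ← Real.sqrt_mul (mul_nonneg (by positivity) hS.det_pos.le),
      ← Real.sqrt_mul (mul_nonneg (by positivity) hSy.det_pos.le)]
    congr 2
    field_simp
  have hexp : Real.exp (-((x - m) ⬝ᵥ (S⁻¹ *ᵥ (x - m))) / 2) *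
        Real.exp (-((y - H *ᵥ x) ⬝ᵥ (R⁻¹ *ᵥ (y - H *ᵥ x))) / 2)
      = Real.exp (-((y - H *ᵥ m) ⬝ᵥ ((H * S * Hᵀ + R)⁻¹ *ᵥ (y - H *ᵥ m))) / 2) *
        Real.exp (-((x - (m + (S * Hᵀ * (H * S * Hᵀ + R)⁻¹) *ᵥ (y - H *ᵥ m))) ⬝ᵥ
            ((S⁻¹ + Hᵀ * R⁻¹ * H) *ᵥ
              (x - (m + (S * Hᵀ * (H * S * Hᵀ + R)⁻¹) *ᵥ (y - H *ᵥ m))))) / 2) := by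
    rw [← Real.exp_add, ← Real.exp_add]
    congr 1
    have hq := quad_identity (H := H) hS hR m x y
    linarith
  unfold gaussDensity
  rw [hS'inv, hS'det]
  calc (Real.sqrt ((2 * π) ^ k * S.det))⁻¹ * Real.exp (-((x - m) ⬝ᵥ (S⁻¹ *ᵥ (x - m))) / 2) *
        ((Real.sqrt ((2 * π) ^ d * R.det))⁻¹ *
          Real.exp (-((y - H *ᵥ x) ⬝ᵥ (R⁻¹ *ᵥ (y - H *ᵥ x))) / 2))
      = ((Real.sqrt ((2 * π) ^ k * S.det))⁻¹ * (Real.sqrt ((2 * π) ^ d * R.det))⁻¹) *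
        (Real.exp (-((x - m) ⬝ᵥ (S⁻¹ *ᵥ (x - m))) / 2) *
          Real.exp (-((y - H *ᵥ x) ⬝ᵥ (R⁻¹ *ᵥ (y - H *ᵥ x))) / 2)) := by ring
    _ = _ := by
        rw [hconst, hexp]
        ring
end KalmanAux
theorem kalman_update {k d : ℕ} (m : Fin k → ℝ) (S : Matrix (Fin k) (Fin k) ℝ)
    (hS : S.PosDef) (H : Matrix (Fin d) (Fin k) ℝ) (R : Matrix (Fin d) (Fin d) ℝ)
    (hR : R.PosDef) (y : Fin d → ℝ)
    (Z : ℝ≥0∞)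
    (hZ : Z = ∫⁻ x, ENNReal.ofReal (gaussDensity (H *ᵥ x) R y) ∂(gaussMeasure m S))
    (K : Matrix (Fin k) (Fin d) ℝ) (hK : K = S * Hᵀ * (H * S * Hᵀ + R)⁻¹) :
    0 < Z ∧ Z < ⊤ ∧
      (gaussMeasure m S).withDensity
          (fun x => ENNReal.ofReal (gaussDensity (H *ᵥ x) R y) / Z) =
        gaussMeasure (m + K *ᵥ (y - H *ᵥ m)) (S - K * H * S) := by
  subst hK
  have hSy : (H * S * Hᵀ + R).PosDef := KalmanAux.Sy_posDef hS hR
  have hS' : (S - S * Hᵀ * (H * S * Hᵀ + R)⁻¹ * H * S).PosDef := by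
    rw [KalmanAux.S'_eq_P_inv hS hR]; exact (KalmanAux.P_posDef hS hR).inv
  set c₀ := gaussDensity (H *ᵥ m) (H * S * Hᵀ + R) y with hc₀
  have hc₀pos : 0 < c₀ := KalmanAux.gaussDensity_pos hSy y
  have hprior : Measurable fun x => ENNReal.ofReal (gaussDensity m S x) :=
    ENNReal.measurable_ofReal.comp (KalmanAux.measurable_gaussDensity m S)
  have hlik : Measurable fun x : Fin k → ℝ => ENNReal.ofReal (gaussDensity (H *ᵥ x) R y) :=
    ENNReal.measurable_ofReal.comp (KalmanAux.measurable_gaussDensity_obs H R y)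
  set m' := m + (S * Hᵀ * (H * S * Hᵀ + R)⁻¹) *ᵥ (y - H *ᵥ m) with hm'
  have hpost : Measurable fun x =>
      ENNReal.ofReal (gaussDensity m' (S - S * Hᵀ * (H * S * Hᵀ + R)⁻¹ * H * S) x) :=
    ENNReal.measurable_ofReal.comp (KalmanAux.measurable_gaussDensity _ _)
  have hprod : ∀ x, ENNReal.ofReal (gaussDensity m S x)
        * ENNReal.ofReal (gaussDensity (H *ᵥ x) R y)
      = ENNReal.ofReal c₀
        * ENNReal.ofReal (gaussDensity m' (S - S * Hᵀ * (H * S * Hᵀ + R)⁻¹ * H * S) x) := by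
    intro x
    rw [← ENNReal.ofReal_mul (KalmanAux.gaussDensity_pos hS x).le,
      KalmanAux.gauss_product hS hR m y x, hc₀, hm',
      ENNReal.ofReal_mul (KalmanAux.gaussDensity_pos hSy y).le]
  have hZeq : Z = ENNReal.ofReal c₀ := by
    rw [hZ, gaussMeasure, lintegral_withDensity_eq_lintegral_mul _ hprior hlik]
    simp only [Pi.mul_apply]
    simp_rw [hprod]
    rw [lintegral_const_mul _ hpost, KalmanAux.lintegral_gaussDensity hS' m', mul_one]
  refine ⟨by rw [hZeq]; exact ENNReal.ofReal_pos.2 hc₀pos,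
    by rw [hZeq]; exact ENNReal.ofReal_lt_top, ?_⟩
  rw [show gaussMeasure m S = volume.withDensity
      (fun x => ENNReal.ofReal (gaussDensity m S x)) from rfl,
    ← MeasureTheory.withDensity_mul _ hprior (hlik.div_const Z)]
  show volume.withDensity _ = gaussMeasure m' (S - S * Hᵀ * (H * S * Hᵀ + R)⁻¹ * H * S)
  rw [gaussMeasure]
  congr 1
  funext x
  rw [Pi.mul_apply, hZeq, ← mul_div_assoc, hprod x, mul_div_assoc,
    ENNReal.mul_div_cancel (ENNReal.ofReal_pos.2 hc₀pos).ne' ENNReal.ofReal_ne_top]
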